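/- arXiv:1907.05823 — 5 statements merged into one kernel-verified Lean document; each statement's English description precedes it below -/
import Mathlib

section
/- Let T be the sum of d+1 i.i.d. geometric random variables each with success probability 1/n (number of trials until first success). Then for any β ∈ (0,1), Pr[T < (d+1)·β·n] ≤ (e·β)^d. -/
open Finset

/-- Partial sums helper. -/
private def psum {d : ℕ} (f : Fin (d + 1) → ℕ) (j : ℕ) : ℕ :=
  ∑ x ∈ univ.filter (fun x : Fin (d + 1) => (x : ℕ) ≤ j), f x

private lemma psum_step {d : ℕ} (f : Fin (d + 1) → ℕ) (k : Fin (d + 1)) (hk : 1 ≤ (k : ℕ)) :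
    psum f k = psum f ((k : ℕ) - 1) + f k := by
  have hins : univ.filter (fun x : Fin (d + 1) => (x : ℕ) ≤ (k : ℕ))
      = insert k (univ.filter (fun x : Fin (d + 1) => (x : ℕ) ≤ (k : ℕ) - 1)) := by
    ext x
    simp only [mem_filter, mem_univ, true_and, mem_insert]
    constructor
    · intro hx
      rcases eq_or_lt_of_le hx with h | h
      · exact Or.inl (Fin.ext h)
      · exact Or.inr (by omega)
    · rintro (rfl | hx)
      · exact le_rfl
      · omega
  have hnot : k ∉ univ.filter (fun x : Fin (d + 1) => (x : ℕ) ≤ (k : ℕ) - 1) := by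
    simp only [mem_filter, mem_univ, true_and]; omega
  rw [psum, hins, sum_insert hnot, psum, add_comm]

private lemma psum_zero {d : ℕ} (f : Fin (d + 1) → ℕ) : psum f 0 = f 0 := by
  have : univ.filter (fun x : Fin (d + 1) => (x : ℕ) ≤ 0) = {0} := by
    ext x
    simp only [mem_filter, mem_univ, true_and, mem_singleton]
    constructor
    · intro hx; apply Fin.ext; simp only [Fin.val_zero]; omega
    · rintro rfl; simp
  rw [psum, this, sum_singleton]

private lemma psum_top {d : ℕ} (f : Fin (d + 1) → ℕ) : psum f d = ∑ i, f i := by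
  rw [psum]
  congr 1
  ext x
  simp [Nat.lt_succ_iff.mp x.isLt]

private lemma psum_pos {d : ℕ} {f : Fin (d + 1) → ℕ} (hf : ∀ i, 1 ≤ f i) (j : ℕ) :
    1 ≤ psum f j := by
  have h0 : (0 : Fin (d + 1)) ∈ univ.filter (fun x : Fin (d + 1) => (x : ℕ) ≤ j) := by
    simp
  calc 1 ≤ f 0 := hf 0
    _ ≤ psum f j := single_le_sum (fun i _ => Nat.zero_le _) h0

private lemma psum_lt {d t : ℕ} {f : Fin (d + 1) → ℕ} (hf : ∀ i, 1 ≤ f i)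
    (hsum : ∑ i, f i = t) {j : ℕ} (hj : j < d) : psum f j < t := by
  rw [← hsum]
  refine sum_lt_sum_of_subset (subset_univ _) (mem_univ (Fin.last d)) ?_ (hf _)
    (fun _ _ _ => Nat.zero_le _)
  simp only [mem_filter, mem_univ, true_and, Fin.val_last]
  omega

private lemma psum_mono {d : ℕ} {f : Fin (d + 1) → ℕ} (hf : ∀ i, 1 ≤ f i)
    {j j' : ℕ} (hjj : j < j') (hj' : j' ≤ d) : psum f j < psum f j' := by
  refine sum_lt_sum_of_subset ?_ (i := (⟨j', by omega⟩ : Fin (d + 1))) ?_ ?_ (hf _)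
    (fun _ _ _ => Nat.zero_le _)
  · intro x hx
    simp only [mem_filter, mem_univ, true_and] at hx ⊢
    omega
  · simp
  · simp only [mem_filter, mem_univ, true_and]; omega

/-- Counting positive compositions of `t` into `d+1` parts: at most `(t-1).choose d`. -/
private lemma count_le (d t : ℕ) :
    (((Fintype.piFinset fun _ : Fin (d + 1) => Finset.range (t + 1))).filter
        (fun f => (∑ i, f i) = t ∧ ∀ i, 1 ≤ f i)).card ≤ (t - 1).choose d := by
  classical
  have hpc : (Finset.powersetCard d (Finset.range (t-1))).card = (t-1).choose d := by
    rw [Finset.card_powersetCard, Finset.card_range]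
  rw [← hpc]
  refine Finset.card_le_card_of_injOn
    (fun f => (univ : Finset (Fin d)).image (fun i : Fin d => psum f (i : ℕ) - 1)) ?_ ?_
  · intro f hf
    simp only [mem_coe, mem_filter] at hf
    obtain ⟨-, hsum, hpos⟩ := hf
    rw [Finset.mem_coe, Finset.mem_powersetCard]
    constructor
    · intro x hx
      simp only [mem_image, mem_univ, true_and] at hx
      obtain ⟨i, rfl⟩ := hx
      have h1 := psum_pos hpos (i : ℕ)
      have h2 := psum_lt hpos hsum i.isLt
      rw [mem_range]; omega
    · rw [Finset.card_image_of_injective _ ?_, card_univ, Fintype.card_fin]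
      intro a b hab
      simp only at hab
      rcases lt_trichotomy a b with h | h | h
      · have := psum_mono hpos (j := (a:ℕ)) (j' := (b:ℕ)) h (by omega)
        have := psum_pos hpos (a : ℕ); omega
      · exact h
      · have := psum_mono hpos (j := (b:ℕ)) (j' := (a:ℕ)) h (by omega)
        have := psum_pos hpos (b : ℕ); omega
  · intro f hf g hg himg
    simp only [mem_coe, mem_filter] at hf hg
    obtain ⟨-, hfsum, hfpos⟩ := hf
    obtain ⟨-, hgsum, hgpos⟩ := hg
    simp only at himg
    -- strict mono maps with the same image are equal
    have hmf : StrictMono (fun i : Fin d => psum f (i : ℕ) - 1) := by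
      intro a b hab
      have := psum_mono hfpos (j := (a:ℕ)) (j' := (b:ℕ)) hab (by omega)
      have := psum_pos hfpos (a : ℕ)
      simp only; omega
    have hmg : StrictMono (fun i : Fin d => psum g (i : ℕ) - 1) := by
      intro a b hab
      have := psum_mono hgpos (j := (a:ℕ)) (j' := (b:ℕ)) hab (by omega)
      have := psum_pos hgpos (a : ℕ)
      simp only; omega
    set s : Finset ℕ := (univ : Finset (Fin d)).image (fun i : Fin d => psum f (i : ℕ) - 1) with hs
    have hcard : s.card = d := by
      rw [hs, Finset.card_image_of_injective _ hmf.injective, card_univ, Fintype.card_fin]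
    have heqf : (fun i : Fin d => psum f (i : ℕ) - 1) = s.orderEmbOfFin hcard :=
      Finset.orderEmbOfFin_unique hcard (fun x => Finset.mem_image_of_mem _ (mem_univ x)) hmf
    have heqg : (fun i : Fin d => psum g (i : ℕ) - 1) = s.orderEmbOfFin hcard := by
      refine Finset.orderEmbOfFin_unique hcard (fun x => ?_) hmg
      rw [himg]
      exact Finset.mem_image_of_mem _ (mem_univ x)
    have hps : ∀ j : ℕ, j ≤ d → psum f j = psum g j := by
      intro j hj
      rcases eq_or_lt_of_le hj with rfl | hjd
      · rw [psum_top, psum_top, hfsum, hgsum]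
      · have := congrFun (heqf.trans heqg.symm) ⟨j, hjd⟩
        simp only at this
        have h1 := psum_pos hfpos j
        have h2 := psum_pos hgpos j
        omega
    funext k
    rcases Nat.eq_zero_or_pos (k : ℕ) with hk | hk
    · have hk0 : k = 0 := Fin.ext hk
      subst hk0
      have := hps 0 (Nat.zero_le _)
      rwa [psum_zero, psum_zero] at this
    · have h1 := psum_step f k hk
      have h2 := psum_step g k hk
      have h3 := hps (k : ℕ) (by omega)
      have h4 := hps ((k : ℕ) - 1) (by omega)
      omega

open Finset in
private lemma hockey (d : ℕ) : ∀ M : ℕ,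
    (∑ t ∈ range M, if t = 0 then 0 else (t - 1).choose d) = (M - 1).choose (d + 1) := by
  intro M
  induction M with
  | zero => simp
  | succ M ih =>
    rw [Finset.sum_range_succ, ih]
    rcases Nat.eq_zero_or_pos M with rfl | hM
    · simp
    · have h1 : M + 1 - 1 = (M - 1) + 1 := by omega
      rw [if_neg (by omega), h1, Nat.choose_succ_succ']
      omega

open MeasureTheory ProbabilityTheory
open scoped ENNReal


open MeasureTheory ProbabilityTheory

/-- Let `T` be the sum of `d+1` i.i.d. geometric random variables with success
probability `1/n` (counting the number of trials until and including the first
success). Then for `β ∈ (0,1)`, `Pr[T < (d+1)·β·n] ≤ (e·β)^d`. -/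
theorem stmt2 {Ω : Type*} [MeasurableSpace Ω] (μ : Measure Ω) [IsProbabilityMeasure μ]
    (n : ℕ) (hn : 1 ≤ n) (d : ℕ) (Y : Fin (d + 1) → Ω → ℕ)
    (hmeas : ∀ i, Measurable (Y i))
    (hind : iIndepFun Y μ)
    (hgeom : ∀ i, ∀ k : ℕ,
      μ {ω | Y i ω = k + 1} = ENNReal.ofReal ((1 - 1 / n) ^ k * (1 / n)))
    (hpos : ∀ i, μ {ω | Y i ω = 0} = 0)
    (β : ℝ) (hβ0 : 0 < β) (hβ1 : β < 1) :
    μ {ω | ((∑ i, Y i ω : ℕ) : ℝ) < (d + 1) * β * n} ≤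
      ENNReal.ofReal ((Real.exp 1 * β) ^ d) := by
  classical
  have hn' : (1 : ℝ) ≤ n := by exact_mod_cast hn
  by_cases hcase : 1 ≤ Real.exp 1 * β
  · calc μ _ ≤ 1 := prob_le_one
      _ ≤ ENNReal.ofReal ((Real.exp 1 * β) ^ d) := by
          rw [← ENNReal.ofReal_one]
          exact ENNReal.ofReal_le_ofReal (one_le_pow₀ hcase)
  push_neg at hcase
  set m : ℝ := (d + 1) * β * n with hm
  have hm0 : 0 < m := by positivity
  set M : ℕ := ⌈m⌉₊ with hM
  clear_value m
  -- rewrite event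
  have hevent : {ω | ((∑ i, Y i ω : ℕ) : ℝ) < m}
      = ⋃ t ∈ Finset.range M, {ω | (∑ i, Y i ω) = t} := by
    ext ω
    simp only [Set.mem_setOf_eq, Set.mem_iUnion, Finset.mem_range, exists_prop]
    constructor
    · intro h
      exact ⟨∑ i, Y i ω, Nat.lt_ceil.mpr h, rfl⟩
    · rintro ⟨t, ht, hts⟩
      rw [hts]
      exact Nat.lt_ceil.mp (hts ▸ ht)
  set q : ℝ≥0∞ := ENNReal.ofReal (1 / n) ^ (d + 1) with hq
  -- per-t bound
  have key : ∀ t : ℕ, μ {ω | (∑ i, Y i ω) = t}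
      ≤ ((((Fintype.piFinset fun _ : Fin (d + 1) => Finset.range (t + 1))).filter
          (fun f => (∑ i, f i) = t ∧ ∀ i, 1 ≤ f i)).card : ℝ≥0∞) * q := by
    intro t
    set F : Finset (Fin (d + 1) → ℕ) :=
      ((Fintype.piFinset fun _ : Fin (d + 1) => Finset.range (t + 1))).filter
        (fun f => (∑ i, f i) = t) with hF
    have hsub : {ω | (∑ i, Y i ω) = t} ⊆ ⋃ f ∈ F, ⋂ i, Y i ⁻¹' {f i} := by
      intro ω hω
      simp only [Set.mem_setOf_eq] at hω
      refine Set.mem_iUnion.mpr ⟨fun i => Y i ω, Set.mem_iUnion.mpr ⟨?_, ?_⟩⟩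
      · rw [hF, Finset.mem_filter]
        refine ⟨Fintype.mem_piFinset.mpr fun i => ?_, hω⟩
        rw [Finset.mem_range, Nat.lt_succ_iff, ← hω]
        exact Finset.single_le_sum (f := fun j => Y j ω) (fun j _ => Nat.zero_le _) (Finset.mem_univ i)
      · exact Set.mem_iInter.mpr fun i => rfl
    have hprod : ∀ f : Fin (d + 1) → ℕ,
        μ (⋂ i, Y i ⁻¹' {f i}) = ∏ i, μ (Y i ⁻¹' {f i}) := fun f =>
      hind.meas_iInter fun i => ⟨{f i}, measurableSet_singleton _, rfl⟩
    have hterm : ∀ f ∈ F, μ (⋂ i, Y i ⁻¹' {f i})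
        ≤ if ∀ i, 1 ≤ f i then q else 0 := by
      intro f _
      rw [hprod f]
      by_cases hf : ∀ i, 1 ≤ f i
      · rw [if_pos hf]
        have hle : ∀ i : Fin (d + 1), μ (Y i ⁻¹' {f i}) ≤ ENNReal.ofReal (1 / n) := by
          intro i
          obtain ⟨k, hk⟩ : ∃ k, f i = k + 1 := ⟨f i - 1, by have := hf i; omega⟩
          have hset : Y i ⁻¹' {f i} = {ω | Y i ω = k + 1} := by
            ext ω; simp [hk]
          rw [hset, hgeom i k]
          refine ENNReal.ofReal_le_ofReal ?_
          have h1 : (0:ℝ) ≤ 1 - 1 / n := by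
            have : 1 / (n:ℝ) ≤ 1 := by
              rw [div_le_one (by linarith)]; exact hn'
            linarith
          have h0n : (0:ℝ) < 1 / (n:ℝ) := by positivity
          have h2 : (1 - 1 / (n:ℝ)) ^ k ≤ 1 := pow_le_one₀ h1 (by linarith)
          have h3 : (0:ℝ) ≤ 1 / n := by positivity
          nlinarith
        calc ∏ i, μ (Y i ⁻¹' {f i}) ≤ ∏ _i : Fin (d + 1), ENNReal.ofReal (1 / n) :=
              Finset.prod_le_prod' fun i _ => hle i
          _ = q := by rw [Finset.prod_const, Finset.card_univ, Fintype.card_fin]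
      · rw [if_neg hf]
        push_neg at hf
        obtain ⟨i, hi⟩ := hf
        have hi0 : f i = 0 := by omega
        refine le_of_eq (Finset.prod_eq_zero (Finset.mem_univ i) ?_)
        have : Y i ⁻¹' {f i} = {ω | Y i ω = 0} := by ext ω; simp [hi0]
        rw [this]; exact hpos i
    calc μ {ω | (∑ i, Y i ω) = t} ≤ μ (⋃ f ∈ F, ⋂ i, Y i ⁻¹' {f i}) := measure_mono hsub
      _ ≤ ∑ f ∈ F, μ (⋂ i, Y i ⁻¹' {f i}) := measure_biUnion_finset_le _ _
      _ ≤ ∑ f ∈ F, (if ∀ i, 1 ≤ f i then q else 0) := Finset.sum_le_sum hterm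
      _ = ∑ f ∈ F.filter (fun f => ∀ i, 1 ≤ f i), q := (Finset.sum_filter _ _).symm
      _ = (F.filter (fun f => ∀ i, 1 ≤ f i)).card * q := by
          rw [Finset.sum_const, nsmul_eq_mul]
      _ = _ := by rw [hF, Finset.filter_filter]
  -- combine
  have hb : ∀ t : ℕ, μ {ω | (∑ i, Y i ω) = t}
      ≤ ((if t = 0 then 0 else (t - 1).choose d : ℕ) : ℝ≥0∞) * q := by
    intro t
    refine (key t).trans (mul_le_mul_left (Nat.cast_le.mpr ?_) q)
    rcases Nat.eq_zero_or_pos t with rfl | ht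
    · rw [if_pos rfl, Nat.le_zero, Finset.card_eq_zero]
      rw [Finset.filter_eq_empty_iff]
      rintro f -
      rintro ⟨hsum, hpos'⟩
      have : 1 ≤ ∑ i, f i :=
        le_trans (hpos' 0) (Finset.single_le_sum (fun i _ => Nat.zero_le _) (Finset.mem_univ 0))
      omega
    · rw [if_neg (by omega)]
      exact count_le d t
  have hsum : μ {ω | ((∑ i, Y i ω : ℕ) : ℝ) < m} ≤ ((M - 1).choose (d + 1) : ℝ≥0∞) * q := by
    calc μ {ω | ((∑ i, Y i ω : ℕ) : ℝ) < m}
        ≤ ∑ t ∈ Finset.range M, μ {ω | (∑ i, Y i ω) = t} := by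
          rw [hevent]; exact measure_biUnion_finset_le _ _
      _ ≤ ∑ t ∈ Finset.range M, ((if t = 0 then 0 else (t - 1).choose d : ℕ) : ℝ≥0∞) * q :=
          Finset.sum_le_sum fun t _ => hb t
      _ = ((∑ t ∈ Finset.range M, if t = 0 then 0 else (t - 1).choose d : ℕ) : ℝ≥0∞) * q := by
          rw [← Finset.sum_mul, Nat.cast_sum]
      _ = _ := by rw [hockey]
  refine hsum.trans ?_
  -- final numeric bound
  have hq' : q = ENNReal.ofReal ((1 / n) ^ (d + 1)) := by
    rw [hq, ← ENNReal.ofReal_pow (by positivity)]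
  rw [hq', ← ENNReal.ofReal_natCast, ← ENNReal.ofReal_mul (by positivity)]
  refine ENNReal.ofReal_le_ofReal ?_
  have hnpos : (0:ℝ) < n := by linarith
  have hMm : ((M - 1 : ℕ) : ℝ) ≤ m := by
    rcases Nat.eq_zero_or_pos M with h0 | hMpos
    · rw [h0]; simpa using hm0.le
    · have h1 : (M : ℝ) < m + 1 := by
        rw [hM]; exact Nat.ceil_lt_add_one hm0.le
      have h2 : ((M - 1 : ℕ) : ℝ) = (M : ℝ) - 1 := by
        rw [Nat.cast_sub hMpos, Nat.cast_one]
      linarith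
  have hfac : (0:ℝ) < ((Nat.factorial (d + 1)) : ℝ) := by
    exact_mod_cast Nat.factorial_pos (d + 1)
  have hC : (((M - 1).choose (d + 1) : ℕ) : ℝ) ≤ m ^ (d + 1) / ((Nat.factorial (d + 1)) : ℝ) := by
    have h0 := Nat.choose_le_pow_div (α := ℝ) (d + 1) (M - 1)
    push_cast at h0
    refine h0.trans ((div_le_div_iff_of_pos_right hfac).mpr
      (pow_le_pow_left₀ (Nat.cast_nonneg _) hMm _))
  have hmn : m * (1 / n) = ((d:ℝ) + 1) * β := by
    rw [hm]; field_simp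
  have hexp : ((d:ℝ) + 1) ^ (d + 1) / ((Nat.factorial (d + 1)) : ℝ) ≤ Real.exp 1 ^ (d + 1) := by
    calc ((d:ℝ) + 1) ^ (d + 1) / ((Nat.factorial (d + 1)) : ℝ) ≤ Real.exp ((d:ℝ) + 1) :=
          Real.pow_div_factorial_le_exp (x := (d:ℝ) + 1) (by positivity) (d + 1)
      _ = Real.exp 1 ^ (d + 1) := by
          rw [show ((d:ℝ) + 1) = ((d + 1 : ℕ) : ℝ) * 1 by push_cast; ring,
            Real.exp_nat_mul]
  calc (((M - 1).choose (d + 1) : ℕ) : ℝ) * (1 / n) ^ (d + 1)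
      ≤ (m ^ (d + 1) / ((Nat.factorial (d + 1)) : ℝ)) * (1 / n) ^ (d + 1) := by
        refine mul_le_mul_of_nonneg_right hC (by positivity)
    _ = (m * (1 / n)) ^ (d + 1) / ((Nat.factorial (d + 1)) : ℝ) := by
        rw [mul_pow]; ring
    _ = β ^ (d + 1) * (((d:ℝ) + 1) ^ (d + 1) / ((Nat.factorial (d + 1)) : ℝ)) := by
        rw [hmn, mul_pow]; ring
    _ ≤ β ^ (d + 1) * Real.exp 1 ^ (d + 1) :=
        mul_le_mul_of_nonneg_left hexp (by positivity)
    _ = (Real.exp 1 * β) ^ (d + 1) := by rw [mul_pow]; ring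
    _ ≤ (Real.exp 1 * β) ^ d :=
        pow_le_pow_of_le_one (by positivity) hcase.le (Nat.le_succ d)
end

section
/- Let T be the sum of d+1 i.i.d. geometric random variables each with success probability 1/n. Then for any β ∈ (0,1), Pr[T > 8·max{ln(1/β), d+1}·n] ≤ β². -/
open MeasureTheory ProbabilityTheory
open scoped ENNReal

open MeasureTheory ProbabilityTheory
open scoped ENNReal

lemma my_lintegral_comp_nat {Ω : Type*} [MeasurableSpace Ω] (μ : Measure Ω)
    (Y : Ω → ℕ) (hY : Measurable Y) (f : ℕ → ℝ≥0∞) :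
    ∫⁻ ω, f (Y ω) ∂μ = ∑' k, f k * μ {ω | Y ω = k} := by
  rw [← lintegral_map (measurable_from_top) hY, lintegral_countable' f]
  congr 1; ext k
  rw [Measure.map_apply hY (measurableSet_singleton k)]
  rfl

lemma my_lintegral_prod_indep {Ω ι : Type*} [DecidableEq ι] [MeasurableSpace Ω] {μ : Measure Ω}
    [IsProbabilityMeasure μ]
    (g : ι → Ω → ℝ≥0∞) (hmeas : ∀ i, Measurable (g i))
    (hind : iIndepFun g μ) (s : Finset ι) :
    ∫⁻ ω, ∏ i ∈ s, g i ω ∂μ = ∏ i ∈ s, ∫⁻ ω, g i ω ∂μ := by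
  induction s using Finset.induction with
  | empty => simp
  | @insert i s hi ih =>
    have hindep : IndepFun (∏ j ∈ s, g j) (g i) μ :=
      hind.indepFun_finsetProd_of_notMem hmeas hi
    have hmp : Measurable (fun ω => ∏ j ∈ s, g j ω) := Finset.measurable_prod _ fun j _ => hmeas j
    have key := lintegral_mul_eq_lintegral_mul_lintegral_of_indepFun''
      (f := fun ω => ∏ j ∈ s, g j ω) (g := g i) hmp.aemeasurable (hmeas i).aemeasurable
      (by simpa [Finset.prod_fn] using hindep)
    simp only [Finset.prod_insert hi]
    calc ∫⁻ ω, g i ω * ∏ j ∈ s, g j ω ∂μ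
        = ∫⁻ ω, (∏ j ∈ s, g j ω) * g i ω ∂μ := by simp [mul_comm]
      _ = (∫⁻ ω, ∏ j ∈ s, g j ω ∂μ) * ∫⁻ ω, g i ω ∂μ := key
      _ = _ := by rw [ih]; ring

lemma my_series (x : ℝ) (hx : 1 ≤ x) :
    ∑' k : ℕ, (1 - 1/(2*x))⁻¹ ^ (k+1) * ((1 - 1/x) ^ k * (1/x)) = 2 := by
  have hx0 : (0:ℝ) < x := lt_of_lt_of_le one_pos hx
  have h1 : 1/(2*x) ≤ 1/2 := by
    rw [div_le_div_iff₀ (by linarith) (by norm_num)]; linarith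
  have h2 : (0:ℝ) < 1 - 1/(2*x) := by linarith
  have hq0 : 0 ≤ 1 - 1/x := by
    have : 1/x ≤ 1 := by rw [div_le_one hx0]; linarith
    linarith
  have hq1 : 1 - 1/x < 1 - 1/(2*x) := by
    have : 1/(2*x) < 1/x := by
      rw [div_lt_div_iff₀ (by linarith) hx0]; linarith
    linarith
  have hrq0 : 0 ≤ (1 - 1/(2*x))⁻¹ * (1 - 1/x) :=
    mul_nonneg (inv_nonneg.2 h2.le) hq0
  have hrq1 : (1 - 1/(2*x))⁻¹ * (1 - 1/x) < 1 := by
    rw [inv_mul_lt_iff₀ h2, mul_one]; exact hq1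
  have hgeo := tsum_geometric_of_lt_one hrq0 hrq1
  have hstep : ∀ k : ℕ, (1 - 1/(2*x))⁻¹ ^ (k+1) * ((1 - 1/x) ^ k * (1/x))
      = ((1 - 1/(2*x))⁻¹ * (1/x)) * ((1 - 1/(2*x))⁻¹ * (1 - 1/x)) ^ k := by
    intro k; rw [mul_pow]; ring
  rw [tsum_congr hstep, tsum_mul_left, hgeo]
  have h2x1 : (0:ℝ) < 2*x - 1 := by linarith
  have key : 1 - (1 - 1/(2*x))⁻¹ * (1 - 1/x) = (2*x-1)⁻¹ := by
    field_simp
    ring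
  rw [key, inv_inv]
  field_simp

lemma my_final (x : ℝ) (hx : 1 ≤ x) (d : ℕ) (β : ℝ) (hβ0 : 0 < β) (hβ1 : β < 1) :
    (2:ℝ)^(d+1) / (1 - 1/(2*x))⁻¹ ^ (8 * max (Real.log (1/β)) (↑d+1) * x) ≤ β^2 := by
  have hx0 : (0:ℝ) < x := lt_of_lt_of_le one_pos hx
  have h1 : 1/(2*x) ≤ 1/2 := by
    rw [div_le_div_iff₀ (by linarith) (by norm_num)]; linarith
  have h2 : (0:ℝ) < 1 - 1/(2*x) := by linarith
  have hr0 : (0:ℝ) < (1 - 1/(2*x))⁻¹ := inv_pos.2 h2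
  set L : ℝ := Real.log (1/β) with hL_def
  have hL : 0 < L := Real.log_pos (by rw [lt_div_iff₀ hβ0]; linarith)
  set M : ℝ := max L (↑d+1) with hM_def
  have hML : L ≤ M := le_max_left _ _
  have hMd : (d:ℝ)+1 ≤ M := le_max_right _ _
  have hM0 : 0 < M := lt_of_lt_of_le hL hML
  set t : ℝ := 8 * M * x with ht_def
  have hlogr : 1/(2*x) ≤ Real.log (1 - 1/(2*x))⁻¹ := by
    rw [Real.log_inv]
    have := Real.log_le_sub_one_of_pos h2
    linarith
  have htlogr : 4 * M ≤ t * Real.log (1 - 1/(2*x))⁻¹ := by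
    have ht0 : 0 ≤ t := by positivity
    have h3 : t * (1/(2*x)) ≤ t * Real.log (1 - 1/(2*x))⁻¹ :=
      mul_le_mul_of_nonneg_left hlogr ht0
    have h4 : t * (1/(2*x)) = 4 * M := by
      rw [ht_def]; field_simp; ring
    linarith
  have hlog2 : Real.log 2 ≤ 1 := by
    have := Real.log_le_sub_one_of_pos (by norm_num : (0:ℝ) < 2)
    linarith
  have hlog2' : 0 < Real.log 2 := Real.log_pos (by norm_num)
  have hrt0 : (0:ℝ) < (1 - 1/(2*x))⁻¹ ^ t := Real.rpow_pos_of_pos hr0 _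
  rw [div_le_iff₀ hrt0]
  have e1 : (2:ℝ)^(d+1) = Real.exp ((↑d+1) * Real.log 2) := by
    rw [show ((d:ℝ)+1) = ((d+1 : ℕ):ℝ) by push_cast; ring, ← Real.log_pow,
      Real.exp_log (by positivity)]
  have e2 : β^2 * (1 - 1/(2*x))⁻¹ ^ t = Real.exp (2 * Real.log β + t * Real.log (1 - 1/(2*x))⁻¹) := by
    rw [Real.exp_add, Real.rpow_def_of_pos hr0, mul_comm (Real.log _)]
    congr 1
    rw [show (2:ℝ) * Real.log β = ((2:ℕ):ℝ) * Real.log β by norm_num, ← Real.log_pow,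
      Real.exp_log (by positivity)]
  rw [e1, e2]
  apply Real.exp_le_exp.2
  have hlogβ : Real.log β = -L := by
    rw [hL_def, Real.log_div one_ne_zero hβ0.ne', Real.log_one]; ring
  have hd2 : (↑d+1) * Real.log 2 ≤ M := by
    calc (↑d+1) * Real.log 2 ≤ (↑d+1) * 1 := by
          apply mul_le_mul_of_nonneg_left hlog2 (by positivity)
      _ ≤ M := by linarith
  rw [hlogβ]
  nlinarith [htlogr, hML, hd2, hM0]
lemma my_factor {Ω : Type*} [MeasurableSpace Ω] (μ : Measure Ω) (n : ℕ) (hn : 1 ≤ n)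
    (Z : Ω → ℕ) (hZ : Measurable Z)
    (hg : ∀ k : ℕ, μ {ω | Z ω = k + 1} = ENNReal.ofReal ((1 - 1 / n) ^ k * (1 / n)))
    (h0 : μ {ω | Z ω = 0} = 0) :
    ∫⁻ ω, ENNReal.ofReal (1 - 1/(2*(n:ℝ)))⁻¹ ^ (Z ω) ∂μ = ENNReal.ofReal 2 := by
  have hx : (1:ℝ) ≤ (n:ℝ) := by exact_mod_cast hn
  have hx0 : (0:ℝ) < (n:ℝ) := lt_of_lt_of_le one_pos hx
  have h1 : 1/(2*(n:ℝ)) ≤ 1/2 := by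
    rw [div_le_div_iff₀ (by linarith) (by norm_num)]; linarith
  have h2 : (0:ℝ) < 1 - 1/(2*(n:ℝ)) := by linarith
  have hr0 : (0:ℝ) < (1 - 1/(2*(n:ℝ)))⁻¹ := inv_pos.2 h2
  rw [my_lintegral_comp_nat μ Z hZ (fun k => ENNReal.ofReal (1 - 1/(2*(n:ℝ)))⁻¹ ^ k)]
  rw [tsum_eq_zero_add' ENNReal.summable]
  simp only [pow_zero, one_mul, h0, zero_add]
  have hterm : ∀ k : ℕ, ENNReal.ofReal (1 - 1/(2*(n:ℝ)))⁻¹ ^ (k+1) * μ {ω | Z ω = k + 1}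
      = ENNReal.ofReal ((1 - 1/(2*(n:ℝ)))⁻¹ ^ (k+1) * ((1 - 1/(n:ℝ)) ^ k * (1/(n:ℝ)))) := by
    intro k
    rw [hg k, ← ENNReal.ofReal_pow hr0.le, ← ENNReal.ofReal_mul (by positivity)]
  rw [tsum_congr hterm, ← ENNReal.ofReal_tsum_of_nonneg]
  · rw [my_series (n:ℝ) hx]
  · intro k
    have hq0 : (0:ℝ) ≤ 1 - 1/(n:ℝ) := by
      have : 1/(n:ℝ) ≤ 1 := by rw [div_le_one hx0]; linarith
      linarith
    positivity
  · apply Summable.congr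
      (f := fun k : ℕ => ((1 - 1/(2*(n:ℝ)))⁻¹ * (1/(n:ℝ))) * ((1 - 1/(2*(n:ℝ)))⁻¹ * (1 - 1/(n:ℝ))) ^ k)
    · have hq1 : 1 - 1/(n:ℝ) < 1 - 1/(2*(n:ℝ)) := by
        have : 1/(2*(n:ℝ)) < 1/(n:ℝ) := by
          rw [div_lt_div_iff₀ (by linarith) hx0]; linarith
        linarith
      have hq0 : (0:ℝ) ≤ 1 - 1/(n:ℝ) := by
        have : 1/(n:ℝ) ≤ 1 := by rw [div_le_one hx0]; linarith
        linarith
      have hrq1 : (1 - 1/(2*(n:ℝ)))⁻¹ * (1 - 1/(n:ℝ)) < 1 := by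
        rw [inv_mul_lt_iff₀ h2, mul_one]; exact hq1
      exact (summable_geometric_of_lt_one (by positivity) hrq1).mul_left _
    · intro k; rw [mul_pow]; ring

/-- Let `T` be the sum of `d+1` i.i.d. geometric random variables with success
probability `1/n` (counting the number of trials until and including the first
success). Then for `β ∈ (0,1)`, `Pr[T > 8·max{ln(1/β), d+1}·n] ≤ β²`. -/
theorem stmt3 {Ω : Type*} [MeasurableSpace Ω] (μ : Measure Ω) [IsProbabilityMeasure μ]
    (n : ℕ) (hn : 1 ≤ n) (d : ℕ) (Y : Fin (d + 1) → Ω → ℕ)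
    (hmeas : ∀ i, Measurable (Y i))
    (hind : iIndepFun Y μ)
    (hgeom : ∀ i, ∀ k : ℕ,
      μ {ω | Y i ω = k + 1} = ENNReal.ofReal ((1 - 1 / n) ^ k * (1 / n)))
    (hpos : ∀ i, μ {ω | Y i ω = 0} = 0)
    (β : ℝ) (hβ0 : 0 < β) (hβ1 : β < 1) :
    μ {ω | ((∑ i, Y i ω : ℕ) : ℝ) > 8 * max (Real.log (1 / β)) (d + 1) * n} ≤
      ENNReal.ofReal (β ^ 2) := by
  have hx : (1:ℝ) ≤ (n:ℝ) := by exact_mod_cast hn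
  have hx0 : (0:ℝ) < (n:ℝ) := lt_of_lt_of_le one_pos hx
  have h1 : 1/(2*(n:ℝ)) ≤ 1/2 := by
    rw [div_le_div_iff₀ (by linarith) (by norm_num)]; linarith
  have h2 : (0:ℝ) < 1 - 1/(2*(n:ℝ)) := by linarith
  have hr0 : (0:ℝ) < (1 - 1/(2*(n:ℝ)))⁻¹ := inv_pos.2 h2
  have hr1 : (1:ℝ) ≤ (1 - 1/(2*(n:ℝ)))⁻¹ := by
    rw [one_le_inv_iff₀]
    refine ⟨h2, ?_⟩
    have : (0:ℝ) ≤ 1/(2*(n:ℝ)) := by positivity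
    linarith
  set c : ℝ≥0∞ := ENNReal.ofReal (1 - 1/(2*(n:ℝ)))⁻¹ with hc_def
  set t : ℝ := 8 * max (Real.log (1/β)) ((d:ℝ)+1) * (n:ℝ) with ht_def
  have hfactor : ∀ i, ∫⁻ ω, c ^ (Y i ω) ∂μ = ENNReal.ofReal 2 := fun i =>
    my_factor μ n hn (Y i) (hmeas i) (hgeom i) (hpos i)
  set T : Ω → ℕ := fun ω => ∑ i, Y i ω with hT_def
  have hTmeas : Measurable T := Finset.measurable_sum _ fun i _ => hmeas i
  have hgmeas : ∀ i : Fin (d+1), Measurable ((fun k : ℕ => c ^ k) ∘ Y i) := fun i =>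
    measurable_from_top.comp (hmeas i)
  have hgind : iIndepFun (fun i => (fun k : ℕ => c ^ k) ∘ Y i) μ :=
    hind.comp _ fun i => measurable_from_top
  have hprod : ∫⁻ ω, c ^ (T ω) ∂μ = ENNReal.ofReal 2 ^ (d+1) := by
    have h1' : ∀ ω, c ^ (T ω) = ∏ i, ((fun k : ℕ => c ^ k) ∘ Y i) ω := by
      intro ω
      rw [hT_def]
      exact (Finset.prod_pow_eq_pow_sum Finset.univ (fun i => Y i ω) c).symm
    calc ∫⁻ ω, c ^ (T ω) ∂μ = ∫⁻ ω, ∏ i, ((fun k : ℕ => c ^ k) ∘ Y i) ω ∂μ := by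
          exact lintegral_congr h1'
      _ = ∏ i, ∫⁻ ω, ((fun k : ℕ => c ^ k) ∘ Y i) ω ∂μ :=
          my_lintegral_prod_indep _ hgmeas hgind Finset.univ
      _ = ∏ _i : Fin (d+1), ENNReal.ofReal 2 := Finset.prod_congr rfl fun i _ => hfactor i
      _ = ENNReal.ofReal 2 ^ (d+1) := by
          rw [Finset.prod_const, Finset.card_univ, Fintype.card_fin]
  have hsub : {ω | ((T ω : ℕ) : ℝ) > t} ⊆
      {ω | ENNReal.ofReal ((1 - 1/(2*(n:ℝ)))⁻¹ ^ t) ≤ c ^ (T ω)} := by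
    intro ω hω
    have h1' : (1 - 1/(2*(n:ℝ)))⁻¹ ^ t ≤ (1 - 1/(2*(n:ℝ)))⁻¹ ^ ((T ω : ℕ) : ℝ) :=
      Real.rpow_le_rpow_of_exponent_le hr1 (le_of_lt hω)
    calc ENNReal.ofReal ((1 - 1/(2*(n:ℝ)))⁻¹ ^ t)
        ≤ ENNReal.ofReal ((1 - 1/(2*(n:ℝ)))⁻¹ ^ ((T ω : ℕ) : ℝ)) := ENNReal.ofReal_le_ofReal h1'
      _ = ENNReal.ofReal ((1 - 1/(2*(n:ℝ)))⁻¹ ^ (T ω)) := by rw [Real.rpow_natCast]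
      _ = c ^ (T ω) := by rw [hc_def, ENNReal.ofReal_pow hr0.le]
  have hFmeas : Measurable (fun ω => c ^ (T ω)) := measurable_from_top.comp hTmeas
  have hmarkov := mul_meas_ge_le_lintegral₀ (μ := μ) hFmeas.aemeasurable
    (ENNReal.ofReal ((1 - 1/(2*(n:ℝ)))⁻¹ ^ t))
  rw [hprod] at hmarkov
  have hrt0 : (0:ℝ) < (1 - 1/(2*(n:ℝ)))⁻¹ ^ t := Real.rpow_pos_of_pos hr0 _
  have hε0 : ENNReal.ofReal ((1 - 1/(2*(n:ℝ)))⁻¹ ^ t) ≠ 0 := by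
    rw [Ne, ENNReal.ofReal_eq_zero, not_le]; exact hrt0
  have hεtop : ENNReal.ofReal ((1 - 1/(2*(n:ℝ)))⁻¹ ^ t) ≠ ⊤ := ENNReal.ofReal_ne_top
  have hgoal : {ω | ((∑ i, Y i ω : ℕ) : ℝ) > 8 * max (Real.log (1 / β)) (↑d + 1) * ↑n}
      = {ω | ((T ω : ℕ) : ℝ) > t} := rfl
  rw [hgoal]
  have hle : μ {ω | ((T ω : ℕ) : ℝ) > t} ≤
      ENNReal.ofReal 2 ^ (d+1) / ENNReal.ofReal ((1 - 1/(2*(n:ℝ)))⁻¹ ^ t) := by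
    apply le_trans (measure_mono hsub)
    rw [ENNReal.le_div_iff_mul_le (Or.inl hε0) (Or.inl hεtop), mul_comm]
    exact hmarkov
  refine le_trans hle ?_
  rw [← ENNReal.ofReal_pow (by norm_num : (0:ℝ) ≤ 2), ← ENNReal.ofReal_div_of_pos hrt0]
  exact ENNReal.ofReal_le_ofReal (my_final (n:ℝ) hx d β hβ0 hβ1)
end

section
/- For every real δ ∈ (0,1) and every integer i ≥ 1 there exists a constant c_i ≤ (5/(1−e^{−δ²/12}))·(24i/(e·δ²))^i such that for all integers n ≥ 1, ∑_{j=0}^{n} e^{−δ² j/12}/(n−j+1)^i ≤ c_i / n^i. -/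
open Real Finset

lemma aux_pow_le_exp (i : ℕ) (hi : 1 ≤ i) (x : ℝ) (hx : 0 ≤ x) :
    x ^ i ≤ ((i : ℝ) / Real.exp 1) ^ i * Real.exp x := by
  have hi' : (0:ℝ) < i := by exact_mod_cast Nat.lt_of_lt_of_le Nat.zero_lt_one hi
  have h1 : x / i ≤ Real.exp (x / i - 1) := by
    have := Real.add_one_le_exp (x / i - 1); linarith
  have h2 : (x / i) ^ i ≤ (Real.exp (x / i - 1)) ^ i :=
    pow_le_pow_left₀ (by positivity) h1 i
  have h3 : (Real.exp (x / i - 1)) ^ i = Real.exp (x - i) := by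
    rw [← Real.exp_nat_mul]
    congr 1
    field_simp
  have hx' : x ^ i = (i : ℝ) ^ i * (x / i) ^ i := by
    rw [← mul_pow]
    congr 1
    field_simp
  have he : ((i : ℝ) / Real.exp 1) ^ i * Real.exp x = (i : ℝ) ^ i * Real.exp (x - i) := by
    rw [div_pow, ← Real.exp_nat_mul, mul_one, Real.exp_sub]
    ring
  rw [hx', he]
  have := pow_pos hi' i
  nlinarith [h2, h3]

lemma aux_geom (r : ℝ) (h0 : 0 ≤ r) (h1 : r < 1) (m : ℕ) :
    ∑ j ∈ Finset.range m, r ^ j ≤ 1 / (1 - r) := by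
  have h1r : (0:ℝ) < 1 - r := by linarith
  have heq : ∑ j ∈ Finset.range m, r ^ j = (1 - r ^ m) / (1 - r) := by
    rw [geom_sum_eq h1.ne]
    rw [div_eq_div_iff (by linarith) h1r.ne']
    ring
  rw [heq]
  have : 0 ≤ r ^ m := pow_nonneg h0 m
  gcongr
  linarith

/-- For every `δ ∈ (0,1)` and every integer `i ≥ 1` there exists a constant
`c_i ≤ (5/(1−e^{−δ²/12}))·(24i/(e·δ²))^i` such that for all `n ≥ 1`,
`∑_{j=0}^{n} e^{−δ² j/12}/(n−j+1)^i ≤ c_i / n^i`. -/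
theorem stmt4 (δ : ℝ) (hδ0 : 0 < δ) (hδ1 : δ < 1) (i : ℕ) (hi : 1 ≤ i) :
    ∃ c : ℝ, c ≤ (5 / (1 - Real.exp (-δ ^ 2 / 12))) * (24 * i / (Real.exp 1 * δ ^ 2)) ^ i ∧
      ∀ n : ℕ, 1 ≤ n →
        ∑ j ∈ Finset.range (n + 1),
          Real.exp (-δ ^ 2 * j / 12) / ((n - j + 1 : ℕ) : ℝ) ^ i ≤ c / (n : ℝ) ^ i := by
  have hδ2 : 0 < δ ^ 2 := by positivity
  have hδ2' : δ ^ 2 < 1 := by nlinarith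
  set a : ℝ := δ ^ 2 / 12 with ha_def
  have ha0 : 0 < a := by positivity
  have ha1 : a < 1 / 12 := by rw [ha_def]; linarith
  set r : ℝ := Real.exp (-(a / 2)) with hr_def
  have hr0 : 0 < r := Real.exp_pos _
  have hr1 : r < 1 := Real.exp_lt_one_iff.mpr (by linarith)
  set K : ℝ := (24 * i / (Real.exp 1 * δ ^ 2)) ^ i with hK_def
  have hK0 : 0 ≤ K := by positivity
  set M : ℝ := Real.exp (a / 2) * K with hM_def
  have hM0 : 0 ≤ M := by positivity
  refine ⟨M / (1 - r), ?_, ?_⟩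
  · -- c ≤ bound
    have hexp : Real.exp (-δ ^ 2 / 12) = r ^ 2 := by
      rw [hr_def, ← Real.exp_nat_mul]
      congr 1
      push_cast
      ring
    rw [hexp]
    have hfac : 1 - r ^ 2 = (1 - r) * (1 + r) := by ring
    have h1r : 0 < 1 - r := by linarith
    have h1r' : 0 < 1 + r := by linarith
    have hea : Real.exp (a / 2) < Real.exp 1 := Real.exp_lt_exp.mpr (by linarith)
    have he1 : Real.exp 1 < 3 := by
      have := Real.exp_one_lt_d9; linarith
    have hrinv : Real.exp (a / 2) * r = 1 := by
      rw [hr_def, ← Real.exp_add]; simp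
    have key : Real.exp (a / 2) * (1 + r) ≤ 5 := by
      have h5 : Real.exp (a / 2) * (1 + r) = Real.exp (a / 2) + 1 := by
        rw [mul_add, mul_one, hrinv]
      rw [h5]; linarith
    have goal_eq : (5 / ((1 - r) * (1 + r))) * K = 5 * K / ((1 - r) * (1 + r)) := by ring
    rw [hfac, goal_eq, hM_def, div_le_div_iff₀ h1r (by positivity)]
    nlinarith [mul_le_mul_of_nonneg_right key (mul_nonneg hK0 h1r.le)]
  · intro n hn
    have hn0 : (0:ℝ) < n := by exact_mod_cast hn
    have hnp : (0:ℝ) < (n:ℝ) ^ i := by positivity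
    have key : ∀ j ∈ Finset.range (n + 1),
        Real.exp (-δ ^ 2 * j / 12) / ((n - j + 1 : ℕ) : ℝ) ^ i ≤ r ^ j * (M / (n:ℝ) ^ i) := by
      intro j hj
      rw [Finset.mem_range] at hj
      have hjn : j ≤ n := by omega
      have hm : ((n - j + 1 : ℕ) : ℝ) = (n : ℝ) - j + 1 := by
        push_cast [Nat.cast_sub hjn]; ring
      set m : ℝ := (n : ℝ) - j + 1 with hm_def
      have hm1 : 1 ≤ m := by
        have : (j:ℝ) ≤ n := by exact_mod_cast hjn
        rw [hm_def]; linarith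
      have hm0 : 0 < m := by linarith
      have hj0 : (0:ℝ) ≤ j := Nat.cast_nonneg j
      -- n ≤ m * (j + 1)
      have hnm : (n : ℝ) ≤ m * (j + 1) := by
        rw [hm_def]; nlinarith
      have hni : (n:ℝ) ^ i ≤ m ^ i * ((j:ℝ) + 1) ^ i := by
        rw [← mul_pow]
        exact pow_le_pow_left₀ (le_of_lt hn0) hnm i
      -- (j+1)^i ≤ M * exp(a*j/2)
      have hji : ((j:ℝ) + 1) ^ i ≤ M * Real.exp (a * j / 2) := by
        have hx : (0:ℝ) ≤ a * ((j:ℝ) + 1) / 2 := by positivity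
        have h := aux_pow_le_exp i hi (a * ((j:ℝ) + 1) / 2) hx
        have hrw : ((j:ℝ) + 1) = (2 / a) * (a * ((j:ℝ) + 1) / 2) := by
          field_simp
        have hK : K = (2 / a * ((i:ℝ) / Real.exp 1)) ^ i := by
          rw [hK_def]
          congr 1
          rw [ha_def]
          have he : Real.exp 1 ≠ 0 := (Real.exp_pos 1).ne'
          field_simp
          ring
        calc ((j:ℝ) + 1) ^ i = (2 / a) ^ i * (a * ((j:ℝ) + 1) / 2) ^ i := by
              rw [← mul_pow, ← hrw]
          _ ≤ (2 / a) ^ i * (((i:ℝ) / Real.exp 1) ^ i * Real.exp (a * ((j:ℝ) + 1) / 2)) := by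
              apply mul_le_mul_of_nonneg_left h (by positivity)
          _ = K * Real.exp (a * ((j:ℝ) + 1) / 2) := by
              rw [hK, mul_pow]; ring
          _ = M * Real.exp (a * j / 2) := by
              rw [hM_def, show a * ((j:ℝ) + 1) / 2 = a / 2 + a * j / 2 by ring,
                Real.exp_add]
              ring
      -- core: exp(-(a/2)*j) * n^i ≤ M * m^i
      have hcore : Real.exp (-(a/2) * j) * (n:ℝ) ^ i ≤ M * m ^ i := by
        have h1 : Real.exp (-(a/2) * j) * (n:ℝ) ^ i
            ≤ Real.exp (-(a/2) * j) * (m ^ i * ((j:ℝ) + 1) ^ i) :=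
          mul_le_mul_of_nonneg_left hni (le_of_lt (Real.exp_pos _))
        have h2 : Real.exp (-(a/2) * j) * (m ^ i * ((j:ℝ) + 1) ^ i)
            ≤ Real.exp (-(a/2) * j) * (m ^ i * (M * Real.exp (a * j / 2))) := by
          apply mul_le_mul_of_nonneg_left _ (le_of_lt (Real.exp_pos _))
          exact mul_le_mul_of_nonneg_left hji (by positivity)
        have hee : Real.exp (-(a/2) * j) * Real.exp (a * j / 2) = 1 := by
          rw [← Real.exp_add, show -(a/2) * (j:ℝ) + a * j / 2 = 0 by ring, Real.exp_zero]
        have h3 : Real.exp (-(a/2) * j) * (m ^ i * (M * Real.exp (a * j / 2)))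
            = M * m ^ i := by
          linear_combination (m ^ i * M) * hee
        linarith
      -- now finish term bound
      have hexpj : Real.exp (-δ ^ 2 * j / 12) = r ^ j * Real.exp (-(a/2) * j) := by
        rw [hr_def, ← Real.exp_nat_mul, ← Real.exp_add]
        congr 1
        rw [ha_def]
        ring
      have hrj : 0 ≤ r ^ j := pow_nonneg (le_of_lt hr0) j
      rw [hexpj, hm]
      rw [div_le_iff₀ (by positivity : (0:ℝ) < m ^ i)]
      have hrearr : r ^ j * (M / (n:ℝ) ^ i) * m ^ i = r ^ j * (M * m ^ i) / (n:ℝ) ^ i := by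
        ring
      rw [hrearr, le_div_iff₀ hnp]
      calc r ^ j * Real.exp (-(a / 2) * ↑j) * (↑n:ℝ) ^ i
          = r ^ j * (Real.exp (-(a / 2) * ↑j) * (↑n:ℝ) ^ i) := by ring
        _ ≤ r ^ j * (M * m ^ i) := mul_le_mul_of_nonneg_left hcore hrj
    calc ∑ j ∈ Finset.range (n + 1), Real.exp (-δ ^ 2 * j / 12) / ((n - j + 1 : ℕ) : ℝ) ^ i
        ≤ ∑ j ∈ Finset.range (n + 1), r ^ j * (M / (n:ℝ) ^ i) :=
          Finset.sum_le_sum key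
      _ = (∑ j ∈ Finset.range (n + 1), r ^ j) * (M / (n:ℝ) ^ i) := by
          rw [Finset.sum_mul]
      _ ≤ (1 / (1 - r)) * (M / (n:ℝ) ^ i) := by
          apply mul_le_mul_of_nonneg_right (aux_geom r (le_of_lt hr0) hr1 (n+1)) (by positivity)
      _ = M / (1 - r) / (n:ℝ) ^ i := by ring
end

section
/- Let X = ∑_{i=1}^m X_i where X_i ~ Exp(a_i) are independent exponential random variables, μ = E[X], and a = min_i a_i. Then for any λ ≥ 1, Pr[X ≥ λμ] ≤ λ^{−1}·e^{−aμ(λ−1−ln λ)}. -/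
open MeasureTheory ProbabilityTheory

lemma expMeasure_tail_le {r t c : ℝ} (hr : 0 < r) (ht0 : 0 ≤ t) (htr : t ≤ r) :
    expMeasure r {s : ℝ | c ≤ s} ≤ ENNReal.ofReal (Real.exp (-(t * c))) := by
  have hP : IsProbabilityMeasure (expMeasure r) := isProbabilityMeasure_expMeasure hr
  rcases le_or_gt c 0 with hc | hc
  · calc expMeasure r {s : ℝ | c ≤ s} ≤ 1 := prob_le_one
      _ ≤ ENNReal.ofReal (Real.exp (-(t * c))) := by
          rw [ENNReal.one_le_ofReal]
          exact Real.one_le_exp (by nlinarith)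
  · have habs : expMeasure r ≪ (volume : Measure ℝ) :=
      withDensity_absolutelyContinuous _ _
    have hIic : expMeasure r (Set.Iic c) = ENNReal.ofReal (1 - Real.exp (-(r * c))) := by
      rw [expMeasure, gammaMeasure, withDensity_apply _ measurableSet_Iic]
      have h := lintegral_exponentialPDF_eq_antiDeriv hr c
      rw [show gammaPDF 1 r = exponentialPDF r from rfl, h, if_pos hc.le]
    have hsing : expMeasure r {c} = 0 := habs (Real.volume_singleton)
    have hIio : expMeasure r (Set.Iio c) = ENNReal.ofReal (1 - Real.exp (-(r * c))) := by
      rw [← hIic]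
      refine le_antisymm (measure_mono Set.Iio_subset_Iic_self) ?_
      calc expMeasure r (Set.Iic c) = expMeasure r (Set.Iio c ∪ {c}) := by
            rw [Set.Iio_union_right]
        _ ≤ expMeasure r (Set.Iio c) + expMeasure r {c} := measure_union_le _ _
        _ = expMeasure r (Set.Iio c) := by rw [hsing, add_zero]
    have hIci : expMeasure r {s : ℝ | c ≤ s} = ENNReal.ofReal (Real.exp (-(r * c))) := by
      have hset : {s : ℝ | c ≤ s} = (Set.Iio c)ᶜ := by
        ext s; simp [not_lt]
      have h1 : Real.exp (-(r * c)) ≤ 1 := by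
        rw [Real.exp_le_one_iff]; nlinarith
      rw [hset, measure_compl measurableSet_Iio (measure_ne_top _ _), hIio, measure_univ,
        ← ENNReal.ofReal_one, ← ENNReal.ofReal_sub _ (by linarith), sub_sub_cancel]
    rw [hIci]
    exact ENNReal.ofReal_le_ofReal (Real.exp_le_exp.mpr (by nlinarith))

lemma lintegral_exp_expMeasure {r t : ℝ} (hr : 0 < r) (htr : t < r) :
    ∫⁻ x, ENNReal.ofReal (Real.exp (t * x)) ∂(expMeasure r) = ENNReal.ofReal (r / (r - t)) := by
  have hrt : 0 < r - t := sub_pos.mpr htr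
  have hφ : Measurable fun x : ℝ => ENNReal.ofReal (Real.exp (t * x)) := by
    fun_prop
  rw [expMeasure, gammaMeasure, lintegral_withDensity_eq_lintegral_mul _ (show Measurable (gammaPDF 1 r) from (measurable_gammaPDFReal 1 r).ennreal_ofReal) hφ]
  have heq : ∀ x : ℝ, (gammaPDF 1 r * fun x => ENNReal.ofReal (Real.exp (t * x))) x
      = ENNReal.ofReal (r / (r - t)) * exponentialPDF (r - t) x := by
    intro x
    rcases lt_or_ge x 0 with hx | hx
    · rw [Pi.mul_apply, show gammaPDF 1 r x = exponentialPDF r x from rfl,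
        exponentialPDF_of_neg hx, exponentialPDF_of_neg hx, zero_mul, mul_zero]
    · rw [Pi.mul_apply, show gammaPDF 1 r x = exponentialPDF r x from rfl,
        exponentialPDF_of_nonneg hx, exponentialPDF_of_nonneg hx,
        ← ENNReal.ofReal_mul (by positivity), ← ENNReal.ofReal_mul (by positivity)]
      congr 1
      have hre : r / (r - t) * ((r - t) * Real.exp (-((r - t) * x)))
          = r * Real.exp (-((r - t) * x)) := by
        field_simp
      rw [mul_assoc, ← Real.exp_add, show -(r * x) + t * x = -((r - t) * x) by ring, hre]
  calc ∫⁻ x, (gammaPDF 1 r * fun x => ENNReal.ofReal (Real.exp (t * x))) x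
      = ∫⁻ x, ENNReal.ofReal (r / (r - t)) * exponentialPDF (r - t) x := lintegral_congr heq
    _ = ENNReal.ofReal (r / (r - t)) * ∫⁻ x, exponentialPDF (r - t) x :=
        lintegral_const_mul _ ((measurable_exponentialPDFReal _).ennreal_ofReal)
    _ = ENNReal.ofReal (r / (r - t)) := by
        rw [lintegral_exponentialPDF_eq_one hrt, mul_one]

lemma exp_factor_le {aa r lam : ℝ} (haa : 0 < aa) (har : aa ≤ r) (hlam : 1 ≤ lam) :
    r / (r - aa * (1 - 1/lam)) ≤ Real.exp (aa / r * Real.log lam) := by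
  have hlam0 : (0:ℝ) < lam := by linarith
  have hr0 : 0 < r := lt_of_lt_of_le haa har
  set u := aa / r with hu
  have hu0 : 0 < u := div_pos haa hr0
  have hu1 : u ≤ 1 := (div_le_one hr0).mpr har
  have hconv := convexOn_exp.2 (Set.mem_univ (0:ℝ)) (Set.mem_univ (-Real.log lam))
      (by linarith : (0:ℝ) ≤ 1 - u) hu0.le (by ring)
  rw [smul_eq_mul, smul_eq_mul, smul_eq_mul, smul_eq_mul, mul_zero, zero_add, Real.exp_zero,
    mul_one, Real.exp_neg, Real.exp_log hlam0] at hconv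
  -- hconv : Real.exp (u * -Real.log lam) ≤ 1 - u + u * lam⁻¹
  have hkey : Real.exp (-(u * Real.log lam)) ≤ 1 - u * (1 - 1/lam) := by
    calc Real.exp (-(u * Real.log lam)) = Real.exp (u * -Real.log lam) := by rw [mul_neg]
      _ ≤ 1 - u + u * lam⁻¹ := hconv
      _ = 1 - u * (1 - 1/lam) := by rw [one_div]; ring
  have hden : 0 < r - aa * (1 - 1/lam) := by
    have h01 : 0 < 1/lam := by positivity
    nlinarith
  have h2 : r * Real.exp (-(u * Real.log lam)) ≤ r - aa * (1 - 1/lam) := by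
    calc r * Real.exp (-(u * Real.log lam)) ≤ r * (1 - u * (1 - 1/lam)) :=
          mul_le_mul_of_nonneg_left hkey hr0.le
      _ = r - aa * (1 - 1/lam) := by rw [hu]; field_simp
  rw [div_le_iff₀ hden]
  calc r = Real.exp (u * Real.log lam) * (r * Real.exp (-(u * Real.log lam))) := by
        rw [mul_comm, mul_assoc, ← Real.exp_add, neg_add_cancel, Real.exp_zero, mul_one]
    _ ≤ Real.exp (u * Real.log lam) * (r - aa * (1 - 1/lam)) :=
        mul_le_mul_of_nonneg_left h2 (Real.exp_pos _).le

/-- (Janson) Let `X = ∑_{i=1}^m X_i` with `X_i ~ Exp(a_i)` independent,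
`μ = E[X] = ∑_i 1/a_i` and `a = min_i a_i`. For any `λ ≥ 1`,
`Pr[X ≥ λμ] ≤ λ⁻¹·e^{−aμ(λ−1−ln λ)}`. -/
theorem stmt11 {Ω : Type*} [MeasurableSpace Ω] (P : Measure Ω) [IsProbabilityMeasure P]
    (m : ℕ) [NeZero m] (a : Fin m → ℝ) (ha : ∀ i, 0 < a i) (X : Fin m → Ω → ℝ)
    (hmeas : ∀ i, Measurable (X i))
    (hind : iIndepFun X P)
    (hdist : ∀ i, Measure.map (X i) P = expMeasure (a i))
    (μ aa : ℝ) (hμ : μ = ∑ i, 1 / a i)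
    (haa : aa = Finset.univ.inf' Finset.univ_nonempty a)
    (lam : ℝ) (hlam : 1 ≤ lam) :
    P {ω | lam * μ ≤ ∑ i, X i ω} ≤
      ENNReal.ofReal (lam⁻¹ * Real.exp (-(aa * μ * (lam - 1 - Real.log lam)))) := by
  classical
  obtain ⟨i₀, -, hi₀⟩ := Finset.exists_mem_eq_inf' (Finset.univ_nonempty : (Finset.univ : Finset (Fin m)).Nonempty) a
  have haa0 : aa = a i₀ := by rw [haa, hi₀]
  have haapos : 0 < aa := haa0 ▸ ha i₀
  have haale : ∀ i, aa ≤ a i := fun i => haa ▸ Finset.inf'_le a (Finset.mem_univ i)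
  have hlam0 : (0:ℝ) < lam := lt_of_lt_of_le one_pos hlam
  set t : ℝ := aa * (1 - 1/lam) with ht_def
  have ht0 : 0 ≤ t := by
    have : 1/lam ≤ 1 := by rw [div_le_one hlam0]; exact hlam
    have : 0 ≤ 1 - 1/lam := by linarith
    positivity
  have htaa : t < aa := by
    have h01 : 0 < 1/lam := by positivity
    calc t = aa * (1 - 1/lam) := rfl
      _ < aa * 1 := by apply mul_lt_mul_of_pos_left (by linarith) haapos
      _ = aa := mul_one aa
  set x : ℝ := lam * μ with hx_def
  set s₀ : Finset (Fin m) := Finset.univ.erase i₀ with hs₀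
  set Y : Ω → ℝ := fun ω => ∑ j ∈ s₀, X j ω with hY_def
  have hYmeas : Measurable Y := Finset.measurable_sum _ (fun i _ => hmeas i)
  have hTmeas : Measurable (X i₀) := hmeas i₀
  have hφ : Measurable fun u : ℝ => ENNReal.ofReal (Real.exp (t * u)) := by fun_prop
  have hindYT : IndepFun Y (X i₀) P := by
    have h := hind.indepFun_finsetSum_of_notMem hmeas (Finset.notMem_erase i₀ Finset.univ)
    rwa [show (∑ j ∈ s₀, X j) = Y from funext fun ω => by simp [hY_def, Finset.sum_apply]] at h
  have hEvent : {ω | lam * μ ≤ ∑ i, X i ω}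
      = (fun ω => (Y ω, X i₀ ω)) ⁻¹' {q : ℝ × ℝ | x ≤ q.2 + q.1} := by
    ext ω
    simp only [Set.mem_setOf_eq, Set.mem_preimage, hx_def, hY_def]
    rw [← Finset.add_sum_erase _ _ (Finset.mem_univ i₀)]
  have hSmeas : MeasurableSet {q : ℝ × ℝ | x ≤ q.2 + q.1} :=
    measurableSet_le measurable_const (measurable_snd.add measurable_fst)
  have hpair : Measurable fun ω => (Y ω, X i₀ ω) := hYmeas.prodMk hTmeas
  have hmapT : IsProbabilityMeasure (Measure.map (X i₀) P) :=
    Measure.isProbabilityMeasure_map hTmeas.aemeasurable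
  have hmapY : IsProbabilityMeasure (Measure.map Y P) :=
    Measure.isProbabilityMeasure_map hYmeas.aemeasurable
  rw [hEvent, ← Measure.map_apply hpair hSmeas,
    (indepFun_iff_map_prod_eq_prod_map_map hYmeas.aemeasurable hTmeas.aemeasurable).mp hindYT,
    Measure.prod_apply hSmeas]
  -- inner bound
  have hinner : ∀ y : ℝ, (Measure.map (X i₀) P) (Prod.mk y ⁻¹' {q : ℝ × ℝ | x ≤ q.2 + q.1})
      ≤ ENNReal.ofReal (Real.exp (t * y)) * ENNReal.ofReal (Real.exp (-(t * x))) := by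
    intro y
    have hset : Prod.mk y ⁻¹' {q : ℝ × ℝ | x ≤ q.2 + q.1} = {s : ℝ | x - y ≤ s} := by
      ext s
      simp only [Set.mem_preimage, Set.mem_setOf_eq]
      exact sub_le_iff_le_add.symm
    rw [hset, hdist i₀, ← haa0]
    calc expMeasure aa {s : ℝ | x - y ≤ s} ≤ ENNReal.ofReal (Real.exp (-(t * (x - y)))) :=
        expMeasure_tail_le haapos ht0 htaa.le
      _ = ENNReal.ofReal (Real.exp (t * y)) * ENNReal.ofReal (Real.exp (-(t * x))) := by
          rw [← ENNReal.ofReal_mul (Real.exp_nonneg _), ← Real.exp_add]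
          congr 2
          ring
  -- product of lintegrals
  have key : ∀ s : Finset (Fin m),
      ∫⁻ ω, ENNReal.ofReal (Real.exp (t * ∑ j ∈ s, X j ω)) ∂P
        = ∏ j ∈ s, ∫⁻ ω, ENNReal.ofReal (Real.exp (t * X j ω)) ∂P := by
    intro s
    induction s using Finset.induction_on with
    | empty => simp
    | @insert i s hi ih =>
      rw [Finset.prod_insert hi, ← ih]
      have hrw : ∀ ω, ENNReal.ofReal (Real.exp (t * ∑ j ∈ insert i s, X j ω))
          = ((fun ω => ENNReal.ofReal (Real.exp (t * X i ω))) *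
              (fun ω => ENNReal.ofReal (Real.exp (t * ∑ j ∈ s, X j ω)))) ω := by
        intro ω
        rw [Pi.mul_apply, Finset.sum_insert hi, mul_add, Real.exp_add,
          ENNReal.ofReal_mul (Real.exp_nonneg _)]
      have hind2 : IndepFun (fun ω => ENNReal.ofReal (Real.exp (t * X i ω)))
          (fun ω => ENNReal.ofReal (Real.exp (t * ∑ j ∈ s, X j ω))) P := by
        have h1 := (hind.indepFun_finsetSum_of_notMem hmeas hi).symm
        have h2 := h1.comp hφ hφ
        simpa [Function.comp_def, Finset.sum_apply] using h2
      rw [lintegral_congr hrw]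
      exact lintegral_mul_eq_lintegral_mul_lintegral_of_indepFun
        (hφ.comp (hmeas i)) (hφ.comp (Finset.measurable_sum _ fun j _ => hmeas j)) hind2
  have hprod : ∫⁻ ω, ENNReal.ofReal (Real.exp (t * Y ω)) ∂P
      = ∏ j ∈ s₀, ENNReal.ofReal (a j / (a j - t)) := by
    rw [show (fun ω => ENNReal.ofReal (Real.exp (t * Y ω)))
        = fun ω => ENNReal.ofReal (Real.exp (t * ∑ j ∈ s₀, X j ω)) from rfl, key s₀]
    refine Finset.prod_congr rfl fun j _ => ?_
    have hmap := lintegral_map (μ := P) (g := X j)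
      (f := fun u : ℝ => ENNReal.ofReal (Real.exp (t * u))) hφ (hmeas j)
    rw [hdist j, lintegral_exp_expMeasure (ha j) (lt_of_lt_of_le htaa (haale j))] at hmap
    exact hmap.symm
  have hprodle : (∏ j ∈ s₀, ENNReal.ofReal (a j / (a j - t)))
      ≤ ENNReal.ofReal (Real.exp ((aa * μ - 1) * Real.log lam)) := by
    have hsum : ∑ j ∈ s₀, aa / a j * Real.log lam = (aa * μ - 1) * Real.log lam := by
      rw [← Finset.sum_mul]
      congr 1
      rw [hs₀, Finset.sum_erase_eq_sub (Finset.mem_univ i₀), hμ, Finset.mul_sum]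
      congr 1
      · exact Finset.sum_congr rfl fun i _ => by rw [div_eq_mul_one_div]
      · rw [haa0, div_self (ha i₀).ne']
    calc (∏ j ∈ s₀, ENNReal.ofReal (a j / (a j - t)))
        ≤ ∏ j ∈ s₀, ENNReal.ofReal (Real.exp (aa / a j * Real.log lam)) := by
          refine Finset.prod_le_prod' fun j _ => ENNReal.ofReal_le_ofReal ?_
          exact exp_factor_le haapos (haale j) hlam
      _ = ENNReal.ofReal (∏ j ∈ s₀, Real.exp (aa / a j * Real.log lam)) :=
          (ENNReal.ofReal_prod_of_nonneg fun j _ => (Real.exp_nonneg _)).symm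
      _ = ENNReal.ofReal (Real.exp ((aa * μ - 1) * Real.log lam)) := by
          rw [← Real.exp_sum, hsum]
  calc ∫⁻ y, (Measure.map (X i₀) P) (Prod.mk y ⁻¹' {q : ℝ × ℝ | x ≤ q.2 + q.1}) ∂(Measure.map Y P)
      ≤ ∫⁻ y, ENNReal.ofReal (Real.exp (t * y)) * ENNReal.ofReal (Real.exp (-(t * x)))
          ∂(Measure.map Y P) := lintegral_mono hinner
    _ = (∫⁻ y, ENNReal.ofReal (Real.exp (t * y)) ∂(Measure.map Y P))
          * ENNReal.ofReal (Real.exp (-(t * x))) :=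
        lintegral_mul_const' _ _ ENNReal.ofReal_ne_top
    _ = (∫⁻ ω, ENNReal.ofReal (Real.exp (t * Y ω)) ∂P) * ENNReal.ofReal (Real.exp (-(t * x))) := by
        rw [lintegral_map hφ hYmeas]
    _ = (∏ j ∈ s₀, ENNReal.ofReal (a j / (a j - t))) * ENNReal.ofReal (Real.exp (-(t * x))) := by
        rw [hprod]
    _ ≤ ENNReal.ofReal (Real.exp ((aa * μ - 1) * Real.log lam))
          * ENNReal.ofReal (Real.exp (-(t * x))) := mul_le_mul_left hprodle _
    _ = ENNReal.ofReal (lam⁻¹ * Real.exp (-(aa * μ * (lam - 1 - Real.log lam)))) := by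
        rw [← ENNReal.ofReal_mul (Real.exp_nonneg _), ← Real.exp_add]
        congr 1
        rw [show lam⁻¹ = Real.exp (-Real.log lam) by rw [Real.exp_neg, Real.exp_log hlam0],
          ← Real.exp_add]
        congr 1
        rw [ht_def, hx_def]
        field_simp
        ring
end

section
/- Let X = ∑_{i=1}^m X_i where X_i ~ Exp(a_i) are independent exponential random variables, μ = E[X], and a = min_i a_i. Then for any 0 < λ ≤ 1, Pr[X ≤ λμ] ≤ e^{−aμ(λ−1−ln λ)}. -/
open MeasureTheory ProbabilityTheory

section AuxJanson
open Real Set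

lemma expPDFReal_eq (r x : ℝ) :
    exponentialPDFReal r x = if 0 ≤ x then r * Real.exp (-(r * x)) else 0 := by
  rw [exponentialPDFReal, gammaPDFReal]
  simp only [rpow_one, Real.Gamma_one, div_one, sub_self, rpow_zero, mul_one]

lemma integral_exp_mul_expMeasure {r t : ℝ} (hr : 0 < r) (ht : t ≤ 0) :
    ∫ x, Real.exp (t * x) ∂(expMeasure r) = r / (r - t) := by
  have hrt : 0 < r - t := by linarith
  have hm : expMeasure r
      = volume.withDensity (fun x => ((exponentialPDFReal r x).toNNReal : ENNReal)) := rfl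
  rw [hm, integral_withDensity_eq_integral_smul
      ((measurable_exponentialPDFReal r).real_toNNReal) _]
  have h1 : (fun x => (exponentialPDFReal r x).toNNReal • Real.exp (t * x))
      = Set.indicator (Set.Ici (0:ℝ)) (fun x => r * Real.exp (-((r - t) * x))) := by
    funext x
    rw [NNReal.smul_def, smul_eq_mul, expPDFReal_eq]
    by_cases hx : (0:ℝ) ≤ x
    · rw [if_pos hx, Set.indicator_of_mem (Set.mem_Ici.mpr hx),
        Real.coe_toNNReal _ (by positivity), mul_assoc, ← Real.exp_add]
      ring_nf
    · rw [if_neg hx, Set.indicator_of_notMem (by simpa using hx)]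
      simp
  rw [h1, integral_indicator measurableSet_Ici, integral_Ici_eq_integral_Ioi,
    MeasureTheory.integral_const_mul]
  have h2 : ∫ x in Ioi (0:ℝ), Real.exp (-((r - t) * x))
      = (r - t)⁻¹ * ∫ x in Ioi ((r-t) * 0), Real.exp (-x) := by
    rw [← smul_eq_mul, ← integral_comp_mul_left_Ioi (fun x => Real.exp (-x)) 0 hrt]
  rw [h2]
  rw [mul_zero, integral_exp_neg_Ioi_zero]
  field_simp

lemma log_ineq {b s aa : ℝ} (haa : 0 < aa) (hab : aa ≤ b) (hs : 0 ≤ s) :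
    (aa / b) * Real.log (1 + s / aa) ≤ Real.log (1 + s / b) := by
  have hb : 0 < b := lt_of_lt_of_le haa hab
  have hp : 1 ≤ b / aa := (one_le_div haa).mpr hab
  have h := one_add_mul_self_le_rpow_one_add (le_trans (by norm_num) (by positivity : (0:ℝ) ≤ s / b)) hp
  have h1 : 1 + b / aa * (s / b) = 1 + s / aa := by field_simp
  rw [h1] at h
  have hpos : (0:ℝ) < 1 + s / b := by positivity
  have h2 : Real.log (1 + s / aa) ≤ (b / aa) * Real.log (1 + s / b) := by
    calc Real.log (1 + s / aa) ≤ Real.log ((1 + s / b) ^ (b / aa)) :=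
          Real.log_le_log (by positivity) h
    _ = (b / aa) * Real.log (1 + s / b) := Real.log_rpow hpos _
  calc (aa / b) * Real.log (1 + s / aa)
      ≤ (aa / b) * ((b / aa) * Real.log (1 + s / b)) :=
        mul_le_mul_of_nonneg_left h2 (by positivity)
  _ = Real.log (1 + s / b) := by field_simp

end AuxJanson

/-- (Janson) Let `X = ∑_{i=1}^m X_i` with `X_i ~ Exp(a_i)` independent,
`μ = E[X] = ∑_i 1/a_i` and `a = min_i a_i`. For any `0 < λ ≤ 1`,
`Pr[X ≤ λμ] ≤ e^{−aμ(λ−1−ln λ)}`. -/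
theorem stmt12 {Ω : Type*} [MeasurableSpace Ω] (P : Measure Ω) [IsProbabilityMeasure P]
    (m : ℕ) [NeZero m] (a : Fin m → ℝ) (ha : ∀ i, 0 < a i) (X : Fin m → Ω → ℝ)
    (hmeas : ∀ i, Measurable (X i))
    (hind : iIndepFun X P)
    (hdist : ∀ i, Measure.map (X i) P = expMeasure (a i))
    (μ aa : ℝ) (hμ : μ = ∑ i, 1 / a i)
    (haa : aa = Finset.univ.inf' Finset.univ_nonempty a)
    (lam : ℝ) (hlam0 : 0 < lam) (hlam1 : lam ≤ 1) :
    P {ω | ∑ i, X i ω ≤ lam * μ} ≤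
      ENNReal.ofReal (Real.exp (-(aa * μ * (lam - 1 - Real.log lam)))) := by
  have haapos : 0 < aa := by
    rw [haa]; exact (Finset.lt_inf'_iff _).mpr fun i _ => ha i
  have haale : ∀ i, aa ≤ a i := fun i => haa ▸ Finset.inf'_le a (Finset.mem_univ i)
  have hinv1 : (1:ℝ) ≤ lam⁻¹ := by
    have := mul_inv_cancel₀ hlam0.ne'
    nlinarith [inv_pos.mpr hlam0]
  set t : ℝ := aa * (1 - lam⁻¹) with htdef
  have ht0 : t ≤ 0 := mul_nonpos_iff.mpr (Or.inl ⟨haapos.le, by linarith⟩)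
  have hsnn : 0 ≤ -t := by linarith
  -- a.e. nonnegativity
  have hae : ∀ i, ∀ᵐ ω ∂P, 0 ≤ X i ω := by
    intro i
    have h0 : Measure.map (X i) P (Set.Iio 0) = 0 := by
      rw [hdist i]
      show (volume.withDensity (exponentialPDF (a i))) (Set.Iio 0) = 0
      rw [withDensity_apply _ measurableSet_Iio]
      exact lintegral_exponentialPDF_of_nonpos le_rfl
    rw [Measure.map_apply (hmeas i) measurableSet_Iio] at h0
    rw [ae_iff]
    convert h0 using 2
    ext ω
    simp [not_le]
  have haeS : ∀ᵐ ω ∂P, 0 ≤ (∑ i, X i) ω := by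
    filter_upwards [(ae_all_iff).mpr hae] with ω hω
    rw [Finset.sum_apply]
    exact Finset.sum_nonneg fun i _ => hω i
  have hSmeas : Measurable (∑ i, X i) := by
    have : (∑ i, X i) = fun ω => ∑ i, X i ω := by funext ω; simp
    rw [this]
    exact Finset.measurable_sum _ fun i _ => hmeas i
  have hint : Integrable (fun ω => Real.exp (t * (∑ i, X i) ω)) P := by
    refine Integrable.mono' (integrable_const 1)
      ((hSmeas.const_mul t).exp).aestronglyMeasurable ?_
    filter_upwards [haeS] with ω hω
    rw [Real.norm_eq_abs, abs_of_pos (Real.exp_pos _)]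
    exact Real.exp_le_one_iff.mpr (mul_nonpos_iff.mpr (Or.inr ⟨ht0, hω⟩))
  have hcher := measure_le_le_exp_mul_mgf (X := ∑ i, X i) (μ := P) (lam * μ) ht0 hint
  rw [hind.mgf_sum hmeas] at hcher
  -- mgf values
  have hmgf : ∀ i, mgf (X i) P t = a i / (a i - t) := by
    intro i
    rw [mgf]
    have h := integral_map (μ := P) (φ := X i) (f := fun x => Real.exp (t * x))
      (hmeas i).aemeasurable (Continuous.aestronglyMeasurable (by continuity))
    rw [← h, hdist i]
    exact integral_exp_mul_expMeasure (ha i) ht0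
  -- per-term bound
  have hlog1 : Real.log (1 + -t / aa) = -Real.log lam := by
    have h : 1 + -t / aa = lam⁻¹ := by
      rw [htdef]; field_simp; ring
    rw [h, Real.log_inv]
  have hterm : ∀ i, a i / (a i - t) ≤ Real.exp (-((aa / a i) * (-Real.log lam))) := by
    intro i
    have h2 := log_ineq haapos (haale i) hsnn
    rw [hlog1] at h2
    have hat : 0 < a i - t := by have := ha i; linarith
    have h3 : a i / (a i - t) = Real.exp (-Real.log (1 + -t / a i)) := by
      have h4 : 1 + -t / a i = (a i - t) / a i := by field_simp [(ha i).ne']; ring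
      rw [h4, Real.exp_neg, Real.exp_log (div_pos hat (ha i)), inv_div]
    rw [h3]
    exact Real.exp_le_exp.mpr (neg_le_neg h2)
  have hprod : ∏ i, mgf (X i) P t ≤ Real.exp (aa * μ * Real.log lam) := by
    have h5 : ∏ i, mgf (X i) P t ≤ ∏ i, Real.exp (-((aa / a i) * (-Real.log lam))) := by
      refine Finset.prod_le_prod (fun i _ => ?_) (fun i _ => (hmgf i) ▸ hterm i)
      rw [hmgf i]
      have hat : 0 < a i - t := by have := ha i; linarith
      exact (div_pos (ha i) hat).le
    refine h5.trans (le_of_eq ?_)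
    rw [← Real.exp_sum]
    congr 1
    rw [Finset.sum_congr rfl (fun i (_ : i ∈ Finset.univ) =>
      show -((aa / a i) * (-Real.log lam)) = (aa * Real.log lam) * (1 / a i) from by ring),
      ← Finset.mul_sum, hμ]
    ring
  -- assemble the real bound
  have hbound : Real.exp (-t * (lam * μ)) * ∏ i, mgf (X i) P t
      ≤ Real.exp (-(aa * μ * (lam - 1 - Real.log lam))) := by
    calc Real.exp (-t * (lam * μ)) * ∏ i, mgf (X i) P t
        ≤ Real.exp (-t * (lam * μ)) * Real.exp (aa * μ * Real.log lam) :=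
          mul_le_mul_of_nonneg_left hprod (Real.exp_pos _).le
    _ = Real.exp (-(aa * μ * (lam - 1 - Real.log lam))) := by
        rw [← Real.exp_add]
        congr 1
        have : lam⁻¹ * lam = 1 := inv_mul_cancel₀ hlam0.ne'
        rw [htdef]
        linear_combination (aa * μ) * this
  have hset : {ω | ∑ i, X i ω ≤ lam * μ} = {ω | (∑ i, X i) ω ≤ lam * μ} := by
    ext ω; simp
  rw [hset]
  calc P {ω | (∑ i, X i) ω ≤ lam * μ}
      = ENNReal.ofReal (P {ω | (∑ i, X i) ω ≤ lam * μ}).toReal :=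
        (ENNReal.ofReal_toReal (measure_ne_top P _)).symm
  _ ≤ ENNReal.ofReal (Real.exp (-(aa * μ * (lam - 1 - Real.log lam)))) :=
        ENNReal.ofReal_le_ofReal (hcher.trans hbound)
end
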